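/- Let θ₁, θ₂ ∈ ℝⁿ satisfy 0 < θ_min ≤ ‖θᵢ‖ ≤ θ_max for i = 1, 2, and suppose ∇g(a*(θᵢ)) = ωᵢθᵢ with ωᵢ > 0 for i = 1, 2. Assume λ^Δ_min·I ⪯ ∇²g(y) for all y in the closed ball B(a*(θ₁), m'), and ‖∇g(a*(θ₁))‖ ≤ ∇_max, where λ^Δ_min > 0, ∇_max > 0, m' > 0. If ‖θ₁ − θ₂‖ ≤ m_θ for some m_θ < min{θ_min, (λ^Δ_min θ_min²/(2∇_max θ_max))·m'}, then ‖a*(θ₁) − a*(θ₂)‖ ≤ (2∇_max θ_max/(λ^Δ_min θ_min²))·‖θ₁ − θ₂‖. -/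

import Mathlib

open RealInnerProductSpace

lemma taylor_lb {n : ℕ} (g : EuclideanSpace ℝ (Fin n) → ℝ) (hg : ContDiff ℝ 3 g)
    (a₁ : EuclideanSpace ℝ (Fin n)) (m' lam : ℝ)
    (hHess : ∀ y : EuclideanSpace ℝ (Fin n), ‖y - a₁‖ ≤ m' →
      ∀ v : EuclideanSpace ℝ (Fin n), lam * ‖v‖ ^ 2 ≤ ⟪fderiv ℝ (gradient g) y v, v⟫)
    (v : EuclideanSpace ℝ (Fin n)) (hv : ‖v‖ ≤ m') :
    g a₁ + ⟪gradient g a₁, v⟫ + lam / 2 * ‖v‖ ^ 2 ≤ g (a₁ + v) := by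
  have hgd : Differentiable ℝ g := hg.differentiable (by norm_num)
  have hGc : ContDiff ℝ 2 (gradient g) := by
    have h1 : ContDiff ℝ 2 (fderiv ℝ g) := hg.fderiv_right (by norm_num)
    exact ((InnerProductSpace.toDual ℝ (EuclideanSpace ℝ (Fin n))).symm.contDiff.comp h1 : _)
  have hGd : Differentiable ℝ (gradient g) := hGc.differentiable (by norm_num)
  have hfg : ∀ x w : EuclideanSpace ℝ (Fin n), fderiv ℝ g x w = ⟪gradient g x, w⟫ := by
    intro x w
    rw [gradient, InnerProductSpace.toDual_symm_apply]
  set γ : ℝ → EuclideanSpace ℝ (Fin n) := fun s => a₁ + s • v with hγdef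
  have hγ : ∀ s : ℝ, HasDerivAt γ v s := by
    intro s
    have := ((hasDerivAt_id s).smul_const v).const_add a₁
    rw [one_smul] at this
    exact this
  have hγmem : ∀ s ∈ Set.Icc (0:ℝ) 1, ‖γ s - a₁‖ ≤ m' := by
    intro s hs
    have : γ s - a₁ = s • v := by simp [hγdef]
    rw [this, norm_smul]
    have : |s| ≤ 1 := abs_le.mpr ⟨by linarith [hs.1], hs.2⟩
    calc |s| * ‖v‖ ≤ 1 * ‖v‖ := by
          exact mul_le_mul_of_nonneg_right this (norm_nonneg v)
      _ ≤ m' := by simpa using hv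
  -- derivative of φ
  have hφ : ∀ s : ℝ, HasDerivAt (fun s => g (γ s)) ⟪gradient g (γ s), v⟫ s := by
    intro s
    have := (hgd (γ s)).hasFDerivAt.comp_hasDerivAt s (hγ s)
    rwa [hfg] at this
  have hψ : ∀ s : ℝ, HasDerivAt (fun s => ⟪gradient g (γ s), v⟫)
      ⟪fderiv ℝ (gradient g) (γ s) v, v⟫ s := by
    intro s
    have h1 : HasDerivAt (fun s => gradient g (γ s)) (fderiv ℝ (gradient g) (γ s) v) s :=
      (hGd (γ s)).hasFDerivAt.comp_hasDerivAt s (hγ s)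
    have h2 : HasDerivAt (fun s => ⟪v, gradient g (γ s)⟫) ⟪v, fderiv ℝ (gradient g) (γ s) v⟫ s := by
      exact (innerSL ℝ v).hasFDerivAt.comp_hasDerivAt s h1
    have h3 : (fun s => ⟪v, gradient g (γ s)⟫) = (fun s => ⟪gradient g (γ s), v⟫) :=
      funext fun s => real_inner_comm _ _
    rw [h3, real_inner_comm] at h2
    exact h2
  -- step 1
  set L : ℝ := lam * ‖v‖ ^ 2 with hLdef
  have step1 : ∀ s ∈ Set.Icc (0:ℝ) 1, ⟪gradient g a₁, v⟫ + L * s ≤ ⟪gradient g (γ s), v⟫ := by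
    have hF : ∀ s : ℝ, HasDerivAt (fun s => ⟪gradient g (γ s), v⟫ - L * s)
        (⟪fderiv ℝ (gradient g) (γ s) v, v⟫ - L) s := by
      intro s
      exact (hψ s).sub ((hasDerivAt_id s).const_mul L |>.congr_deriv (by ring))
    have hmono : MonotoneOn (fun s => ⟪gradient g (γ s), v⟫ - L * s) (Set.Icc (0:ℝ) 1) := by
      apply monotoneOn_of_deriv_nonneg (convex_Icc 0 1)
      · exact fun s _ => ((hF s).continuousAt).continuousWithinAt
      · exact fun s _ => ((hF s).differentiableAt).differentiableWithinAt
      · intro s hs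
        rw [(hF s).deriv]
        have hs' : s ∈ Set.Icc (0:ℝ) 1 := interior_subset hs
        have := hHess (γ s) (hγmem s hs') v
        rw [hLdef]
        exact sub_nonneg.mpr this
    intro s hs
    have h0 : (0:ℝ) ∈ Set.Icc (0:ℝ) 1 := by constructor <;> norm_num
    have := hmono h0 hs hs.1
    have hγ0 : γ 0 = a₁ := by simp [hγdef]
    simp only [hγ0, mul_zero, sub_zero] at this
    linarith
  -- step 2
  have hF2 : ∀ s : ℝ, HasDerivAt
      (fun s => g (γ s) - ⟪gradient g a₁, v⟫ * s - L * s ^ 2 / 2)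
      (⟪gradient g (γ s), v⟫ - ⟪gradient g a₁, v⟫ - L * s) s := by
    intro s
    have h1 : HasDerivAt (fun s : ℝ => ⟪gradient g a₁, v⟫ * s) ⟪gradient g a₁, v⟫ s := by
      simpa using (hasDerivAt_id s).const_mul ⟪gradient g a₁, v⟫
    have h2 : HasDerivAt (fun s : ℝ => L * s ^ 2 / 2) (L * s) s := by
      have := ((hasDerivAt_pow 2 s).const_mul L).div_const 2
      simpa using this.congr_deriv (by ring)
    exact ((hφ s).sub h1).sub h2
  have hmono2 : MonotoneOn (fun s => g (γ s) - ⟪gradient g a₁, v⟫ * s - L * s ^ 2 / 2)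
      (Set.Icc (0:ℝ) 1) := by
    apply monotoneOn_of_deriv_nonneg (convex_Icc 0 1)
    · exact fun s _ => ((hF2 s).continuousAt).continuousWithinAt
    · exact fun s _ => ((hF2 s).differentiableAt).differentiableWithinAt
    · intro s hs
      rw [(hF2 s).deriv]
      have hs' : s ∈ Set.Icc (0:ℝ) 1 := interior_subset hs
      have := step1 s hs'
      linarith
  have h01 := hmono2 (by constructor <;> norm_num) (by constructor <;> norm_num) zero_le_one
  have hγ0 : γ 0 = a₁ := by simp [hγdef]
  have hγ1 : γ 1 = a₁ + v := by simp [hγdef]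
  simp only [hγ0, hγ1, mul_zero, mul_one, zero_pow, sub_zero] at h01
  have : L * (1:ℝ) ^ 2 / 2 = lam / 2 * ‖v‖ ^ 2 := by rw [hLdef]; ring
  rw [this] at h01
  have h00 : L * (0:ℝ) ^ 2 / 2 = 0 := by ring
  linarith

theorem astar_local_lipschitz {n : ℕ}
    (g : EuclideanSpace ℝ (Fin n) → ℝ) (hg : ContDiff ℝ 3 g)
    (κ : ℝ) (hκ : 0 < κ) (hsc : StrongConvexOn Set.univ κ g)
    (hcompact : IsCompact {x : EuclideanSpace ℝ (Fin n) | g x ≤ 0})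
    (θ₁ θ₂ : EuclideanSpace ℝ (Fin n)) (θmin θmax : ℝ) (hθmin : 0 < θmin)
    (hθ₁lb : θmin ≤ ‖θ₁‖) (hθ₁ub : ‖θ₁‖ ≤ θmax)
    (hθ₂lb : θmin ≤ ‖θ₂‖) (hθ₂ub : ‖θ₂‖ ≤ θmax)
    (a₁ a₂ : EuclideanSpace ℝ (Fin n))
    (ha₁mem : g a₁ ≤ 0) (ha₁max : ∀ b, g b ≤ 0 → ⟪θ₁, b⟫ ≤ ⟪θ₁, a₁⟫) (ha₁bdry : g a₁ = 0)
    (ha₂mem : g a₂ ≤ 0) (ha₂max : ∀ b, g b ≤ 0 → ⟪θ₂, b⟫ ≤ ⟪θ₂, a₂⟫) (ha₂bdry : g a₂ = 0)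
    (ω₁ ω₂ : ℝ) (hω₁ : 0 < ω₁) (hω₂ : 0 < ω₂)
    (hgrad₁ : gradient g a₁ = ω₁ • θ₁) (hgrad₂ : gradient g a₂ = ω₂ • θ₂)
    (m' gradmax lamΔmin : ℝ) (hm' : 0 < m') (hgradmax : 0 < gradmax)
    (hlamΔmin : 0 < lamΔmin)
    (hHess : ∀ y : EuclideanSpace ℝ (Fin n), ‖y - a₁‖ ≤ m' →
      ∀ v : EuclideanSpace ℝ (Fin n),
        lamΔmin * ‖v‖ ^ 2 ≤ ⟪fderiv ℝ (gradient g) y v, v⟫)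
    (hgradbnd : ‖gradient g a₁‖ ≤ gradmax)
    (mθ : ℝ)
    (hmθ : mθ < min θmin (lamΔmin * θmin ^ 2 / (2 * gradmax * θmax) * m'))
    (hdist : ‖θ₁ - θ₂‖ ≤ mθ) :
    ‖a₁ - a₂‖ ≤ 2 * gradmax * θmax / (lamΔmin * θmin ^ 2) * ‖θ₁ - θ₂‖ := by
  have hθmm : θmin ≤ θmax := le_trans hθ₁lb hθ₁ub
  have hθmax : 0 < θmax := lt_of_lt_of_le hθmin hθmm
  set C : ℝ := 2 * gradmax * θmax / (lamΔmin * θmin ^ 2) with hCdef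
  have hCpos : 0 < C := by positivity
  set d : ℝ := ‖θ₁ - θ₂‖ with hddef
  have hdnn : 0 ≤ d := norm_nonneg _
  have hω₁bnd : ω₁ * θmin ≤ gradmax := by
    have h1 : ω₁ * ‖θ₁‖ = ‖gradient g a₁‖ := by
      rw [hgrad₁, norm_smul, Real.norm_eq_abs, abs_of_pos hω₁]
    nlinarith [norm_nonneg θ₁]
  have hden : (0:ℝ) < lamΔmin * θmin ^ 2 := by positivity
  have hCd : C * d < m' := by
    have h2 : mθ < lamΔmin * θmin ^ 2 / (2 * gradmax * θmax) * m' :=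
      lt_of_lt_of_le hmθ (min_le_right _ _)
    calc C * d ≤ C * mθ := mul_le_mul_of_nonneg_left hdist (le_of_lt hCpos)
      _ < C * (lamΔmin * θmin ^ 2 / (2 * gradmax * θmax) * m') :=
          mul_lt_mul_of_pos_left h2 hCpos
      _ = m' := by rw [hCdef]; field_simp
  rcases eq_or_lt_of_le (norm_nonneg (a₂ - a₁)) with h0 | hΔpos
  · rw [norm_sub_rev, ← h0]
    positivity
  · set Δ := a₂ - a₁ with hΔdef
    set t : ℝ := min 1 (m' / ‖Δ‖) with htdef
    have htpos : 0 < t := lt_min one_pos (div_pos hm' hΔpos)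
    have ht1 : t ≤ 1 := min_le_left _ _
    have htΔ : t * ‖Δ‖ ≤ m' := by
      have := mul_le_mul_of_nonneg_right (min_le_right 1 (m' / ‖Δ‖)) (norm_nonneg Δ)
      rwa [div_mul_cancel₀ _ (ne_of_gt hΔpos)] at this
    have hnormv : ‖t • Δ‖ = t * ‖Δ‖ := by
      rw [norm_smul, Real.norm_eq_abs, abs_of_pos htpos]
    have hkey := taylor_lb g hg a₁ m' lamΔmin hHess (t • Δ) (by rw [hnormv]; exact htΔ)
    have hconv : ConvexOn ℝ Set.univ g := hsc.convexOn fun r => by positivity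
    have hmid : g (a₁ + t • Δ) ≤ 0 := by
      have hpt : a₁ + t • Δ = (1 - t) • a₁ + t • a₂ := by
        rw [hΔdef]; module
      have := hconv.2 (Set.mem_univ a₁) (Set.mem_univ a₂)
        (by linarith : (0:ℝ) ≤ 1 - t) (le_of_lt htpos) (by ring)
      rw [← hpt] at this
      calc g (a₁ + t • Δ) ≤ (1 - t) * g a₁ + t * g a₂ := this
        _ = 0 := by rw [ha₁bdry, ha₂bdry]; ring
    have hθ₂Δ : 0 ≤ ⟪θ₂, Δ⟫ := by
      rw [hΔdef, inner_sub_right]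
      have := ha₂max a₁ ha₁mem
      linarith
    have hCS : -(d * ‖Δ‖) ≤ ⟪θ₁ - θ₂, Δ⟫ := by
      have := abs_real_inner_le_norm (θ₁ - θ₂) Δ
      rw [hddef]
      cases abs_le.mp this with
      | intro h1 h2 => linarith
    have hsplit : ⟪θ₁, Δ⟫ = ⟪θ₁ - θ₂, Δ⟫ + ⟪θ₂, Δ⟫ := by
      rw [inner_sub_left]; ring
    have hlow : -(ω₁ * (d * ‖Δ‖)) ≤ ⟪gradient g a₁, Δ⟫ := by
      rw [hgrad₁, real_inner_smul_left, hsplit, mul_add]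
      have P1 := mul_le_mul_of_nonneg_left hCS (le_of_lt hω₁)
      rw [mul_neg] at P1
      have P2 := mul_nonneg (le_of_lt hω₁) hθ₂Δ
      linarith
    have hsm : ⟪gradient g a₁, t • Δ⟫ = t * ⟪gradient g a₁, Δ⟫ := real_inner_smul_right _ _ _
    have hmain : lamΔmin / 2 * (t * ‖Δ‖) ^ 2 ≤ t * (ω₁ * (d * ‖Δ‖)) := by
      rw [hnormv, hsm] at hkey
      rw [ha₁bdry] at hkey
      have P := mul_le_mul_of_nonneg_left hlow (le_of_lt htpos)
      rw [mul_neg] at P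
      linarith
    have hs : 0 < t * ‖Δ‖ := mul_pos htpos hΔpos
    have h3 : lamΔmin * (t * ‖Δ‖) ≤ 2 * ω₁ * d := by
      rw [← mul_le_mul_iff_of_pos_right hs]
      calc lamΔmin * (t * ‖Δ‖) * (t * ‖Δ‖) = 2 * (lamΔmin / 2 * (t * ‖Δ‖) ^ 2) := by ring
        _ ≤ 2 * (t * (ω₁ * (d * ‖Δ‖))) := by linarith
        _ = 2 * ω₁ * d * (t * ‖Δ‖) := by ring
    have h5 : ω₁ * θmin ^ 2 ≤ gradmax * θmax :=
      calc ω₁ * θmin ^ 2 = ω₁ * θmin * θmin := by ring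
        _ ≤ gradmax * θmin := mul_le_mul_of_nonneg_right hω₁bnd (le_of_lt hθmin)
        _ ≤ gradmax * θmax := mul_le_mul_of_nonneg_left hθmm (le_of_lt hgradmax)
    have h4 : t * ‖Δ‖ ≤ C * d := by
      rw [hCdef, div_mul_eq_mul_div, le_div_iff₀ hden]
      calc t * ‖Δ‖ * (lamΔmin * θmin ^ 2) = lamΔmin * (t * ‖Δ‖) * θmin ^ 2 := by ring
        _ ≤ 2 * ω₁ * d * θmin ^ 2 := mul_le_mul_of_nonneg_right h3 (sq_nonneg θmin)
        _ = ω₁ * θmin ^ 2 * (2 * d) := by ring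
        _ ≤ gradmax * θmax * (2 * d) :=
            mul_le_mul_of_nonneg_right h5 (by linarith)
        _ = 2 * gradmax * θmax * d := by ring
    rcases le_or_gt (m' / ‖Δ‖) 1 with hc | hc
    · exfalso
      have ht : t = m' / ‖Δ‖ := min_eq_right hc
      have : t * ‖Δ‖ = m' := by
        rw [ht, div_mul_cancel₀ _ (ne_of_gt hΔpos)]
      linarith
    · have ht : t = 1 := min_eq_left (le_of_lt hc)
      rw [ht, one_mul] at h4
      rw [norm_sub_rev]
      exact h4
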